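/- The only positive integer solutions (k, n) of the equation F_1 + 2F_2 + 3F_3 + ... + kF_k = F_n^2 are (1,1), (1,2), and (3,4). -/

import Mathlib

open Nat

private lemma s5_sq : Real.sqrt 5 ^ 2 = 5 := Real.sq_sqrt (by norm_num)
private lemma s5_lb : 2.236 ≤ Real.sqrt 5 := by nlinarith [s5_sq, Real.sqrt_nonneg 5]
private lemma s5_ub : Real.sqrt 5 ≤ 2.2361 := by nlinarith [s5_sq, Real.sqrt_nonneg 5]

private lemma key (m : ℕ) : (Nat.fib (m+2) : ℝ)
    = (3 + Real.sqrt 5)/2 * Nat.fib m + ((1 - Real.sqrt 5)/2)^m := by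
  induction m using Nat.twoStepInduction with
  | zero => norm_num
  | one => simp [Nat.fib]; nlinarith [s5_sq]
  | more m ih1 ih2 =>
    have h4 : (Nat.fib (m+2+2) : ℝ) = Nat.fib (m+2) + Nat.fib (m+3) := by
      rw [Nat.fib_add_two]; push_cast; ring
    have hfib : (Nat.fib (m+2) : ℝ) = Nat.fib m + Nat.fib (m+1) := by
      rw [Nat.fib_add_two]; push_cast; ring
    rw [h4, hfib, show m+3 = m+1+2 by ring, ih2]
    linear_combination (-(((1 - Real.sqrt 5)/2)^m)/4) * s5_sq + ih1 - hfib

private lemma key_even (m : ℕ) : (Nat.fib (2*m+2) : ℝ)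
    = (3 + Real.sqrt 5)/2 * Nat.fib (2*m) + ((3 - Real.sqrt 5)/2)^m := by
  have h := key (2*m)
  have hb : ((3 - Real.sqrt 5)/2)^m = ((1 - Real.sqrt 5)/2)^(2*m) := by
    rw [pow_mul]; congr 1; nlinarith [s5_sq]
  rw [hb]; exact h

private lemma fibsq (m : ℕ) : Nat.fib (m+2)^2 = Nat.fib m^2 + Nat.fib (2*m+2) := by
  have h1 : Nat.fib (m + (m+1) + 1) = Nat.fib m * Nat.fib (m+1) + Nat.fib (m+1) * Nat.fib (m+2) :=
    Nat.fib_add m (m+1)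
  have h2 : Nat.fib (m+2) = Nat.fib m + Nat.fib (m+1) := Nat.fib_add_two
  have h3 : 2*m+2 = m + (m+1) + 1 := by ring
  rw [h3, h1, h2]; ring

private def dd : ℕ → ℕ
  | 0 => 0
  | 1 => 0
  | (n+2) => Nat.fib (2*n) + dd n

private lemma sqBound (n : ℕ) :
    2 ≤ (Nat.fib (n+1) : ℝ)^2 + 1 - (3 + Real.sqrt 5)/2 * dd (n+1) ∧
    (Nat.fib (n+1) : ℝ)^2 + 1 - (3 + Real.sqrt 5)/2 * dd (n+1)
      ≤ 2 + (Real.sqrt 5 - 1)/2 * (1 - ((3 - Real.sqrt 5)/2)^n) := by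
  have hs1 := s5_lb
  have hs2 := s5_ub
  have hbpos : (0:ℝ) ≤ (3 - Real.sqrt 5)/2 := by nlinarith
  induction n using Nat.twoStepInduction with
  | zero => norm_num [dd]
  | one =>
    norm_num [dd, Nat.fib]
    nlinarith
  | more n ih1 ih2 =>
    obtain ⟨hl, hu⟩ := ih1
    have hd : dd (n+3) = Nat.fib (2*(n+1)) + dd (n+1) := rfl
    have hsq : (Nat.fib (n+3) : ℝ)^2 = (Nat.fib (n+1):ℝ)^2 + Nat.fib (2*(n+1)+2) := by
      have h : ((Nat.fib (n+1+2))^2 : ℕ) = (Nat.fib (n+1))^2 + Nat.fib (2*(n+1)+2) := fibsq (n+1)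
      exact_mod_cast congrArg (Nat.cast : ℕ → ℝ) h
    have hk := key_even (n+1)
    have hE : (Nat.fib (n+3) : ℝ)^2 + 1 - (3 + Real.sqrt 5)/2 * dd (n+3)
        = ((Nat.fib (n+1) : ℝ)^2 + 1 - (3 + Real.sqrt 5)/2 * dd (n+1))
          + ((3 - Real.sqrt 5)/2)^(n+1) := by
      rw [hsq, hd]; push_cast; linear_combination hk
    constructor
    · rw [show n+2+1 = n+3 by ring, hE]
      have : (0:ℝ) ≤ ((3 - Real.sqrt 5)/2)^(n+1) := pow_nonneg hbpos _
      linarith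
    · rw [show n+2+1 = n+3 by ring, hE]
      have hbn : (0:ℝ) ≤ ((3 - Real.sqrt 5)/2)^n := pow_nonneg hbpos _
      have key2 : ((Real.sqrt 5 - 1)/2) * ((3 - Real.sqrt 5)/2)^(n+2)
            + ((3 - Real.sqrt 5)/2)^(n+1)
          ≤ ((Real.sqrt 5 - 1)/2) * ((3 - Real.sqrt 5)/2)^n := by
        have expand : ((Real.sqrt 5 - 1)/2) * ((3 - Real.sqrt 5)/2)^(n+2)
              + ((3 - Real.sqrt 5)/2)^(n+1)
            = ((3 - Real.sqrt 5)/2)^n *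
              (((Real.sqrt 5 - 1)/2) * ((3 - Real.sqrt 5)/2)^2 + ((3 - Real.sqrt 5)/2)) := by
          ring
        rw [expand]
        have hfac : ((Real.sqrt 5 - 1)/2) * ((3 - Real.sqrt 5)/2)^2 + ((3 - Real.sqrt 5)/2)
            ≤ (Real.sqrt 5 - 1)/2 := by nlinarith [s5_sq]
        calc ((3 - Real.sqrt 5)/2)^n *
              (((Real.sqrt 5 - 1)/2) * ((3 - Real.sqrt 5)/2)^2 + ((3 - Real.sqrt 5)/2))
            ≤ ((3 - Real.sqrt 5)/2)^n * ((Real.sqrt 5 - 1)/2) :=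
              mul_le_mul_of_nonneg_left hfac hbn
          _ = ((Real.sqrt 5 - 1)/2) * ((3 - Real.sqrt 5)/2)^n := by ring
      linarith

private lemma sumS (m : ℕ) : (∑ j ∈ Finset.Icc 1 (m+2), j * Nat.fib j)
    = m * Nat.fib (m+4) + Nat.fib (m+2) + 2 := by
  induction m with
  | zero => decide
  | succ m ih =>
    have h : (∑ j ∈ Finset.Icc 1 (m+3), j * Nat.fib j)
        = (∑ j ∈ Finset.Icc 1 (m+2), j * Nat.fib j) + (m+3) * Nat.fib (m+3) := by
      rw [show m+3 = (m+2)+1 by ring, Finset.sum_Icc_succ_top (by omega)]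
    rw [h, ih]
    have h5 : Nat.fib (m+5) = Nat.fib (m+3) + Nat.fib (m+4) := Nat.fib_add_two
    have h4 : Nat.fib (m+4) = Nat.fib (m+2) + Nat.fib (m+3) := Nat.fib_add_two
    rw [show m+1+4 = m+5 by ring, h5, h4, show m+1+2 = m+3 by ring]
    ring

private lemma tBound (m : ℕ) (hm : 5 ≤ m) :
    ((Real.sqrt 5 - 1)/2)^m * (1 + m * ((3 - Real.sqrt 5)/2)) ≤ 0.28 := by
  have hs1 := s5_lb
  have hs2 := s5_ub
  have hσ0 : (0:ℝ) ≤ (Real.sqrt 5 - 1)/2 := by nlinarith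
  have hσ : (Real.sqrt 5 - 1)/2 ≤ 0.62 := by nlinarith
  have hβ0 : (0:ℝ) ≤ (3 - Real.sqrt 5)/2 := by nlinarith
  have hβ : (3 - Real.sqrt 5)/2 ≤ 0.382 := by nlinarith
  induction m, hm using Nat.le_induction with
  | base =>
    have h5 : ((Real.sqrt 5 - 1)/2)^5 ≤ 0.62^5 := pow_le_pow_left₀ hσ0 hσ 5
    have h6 : (1:ℝ) + 5 * ((3 - Real.sqrt 5)/2) ≤ 2.91 := by nlinarith
    have hp : (0:ℝ) ≤ ((Real.sqrt 5 - 1)/2)^5 := pow_nonneg hσ0 5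
    nlinarith [mul_le_mul h5 h6 (by nlinarith) (by norm_num)]
  | succ m hm ih =>
    have hmR : (5:ℝ) ≤ m := by exact_mod_cast hm
    have hm0 : (0:ℝ) ≤ m := by linarith
    have hσβ : ((Real.sqrt 5 - 1)/2) * ((3 - Real.sqrt 5)/2) ≤ 0.237 := by nlinarith
    have hβl : (0.3819:ℝ) ≤ (3 - Real.sqrt 5)/2 := by nlinarith
    have step : ((Real.sqrt 5 - 1)/2) * (1 + (m+1) * ((3 - Real.sqrt 5)/2))
        ≤ 1 + m * ((3 - Real.sqrt 5)/2) := by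
      nlinarith [mul_le_mul_of_nonneg_right hσβ hm0, mul_le_mul_of_nonneg_right hβl hm0]
    have hp : (0:ℝ) ≤ ((Real.sqrt 5 - 1)/2)^m := pow_nonneg hσ0 m
    calc ((Real.sqrt 5 - 1)/2)^(m+1) * (1 + (↑(m+1):ℝ) * ((3 - Real.sqrt 5)/2))
        = ((Real.sqrt 5 - 1)/2)^m *
            (((Real.sqrt 5 - 1)/2) * (1 + (m+1) * ((3 - Real.sqrt 5)/2))) := by
          push_cast; ring
      _ ≤ ((Real.sqrt 5 - 1)/2)^m * (1 + m * ((3 - Real.sqrt 5)/2)) :=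
          mul_le_mul_of_nonneg_left step hp
      _ ≤ 0.28 := ih

set_option maxHeartbeats 2000000 in
/-- No solutions with k ≥ 7. -/
private lemma main_case (m n : ℕ) (hm : 5 ≤ m) (hn : 0 < n)
    (h : m * Nat.fib (m+4) + Nat.fib (m+2) + 2 = Nat.fib n ^ 2) : False := by
  have hs1 := s5_lb
  have hs2 := s5_ub
  set s := Real.sqrt 5
  obtain ⟨n', rfl⟩ : ∃ n', n = n'+1 := ⟨n-1, by omega⟩
  obtain ⟨hEl, hEu⟩ := sqBound n'
  set E : ℝ := (Nat.fib (n'+1) : ℝ)^2 + 1 - (3 + s)/2 * dd (n'+1) with hEdef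
  -- upper bound for E
  have hβ0 : (0:ℝ) ≤ (3 - s)/2 := by nlinarith
  have hbn : (0:ℝ) ≤ ((3 - s)/2)^n' := pow_nonneg hβ0 n'
  have hσub : (s - 1)/2 ≤ 0.61805 := by nlinarith
  have hσ0 : (0:ℝ) ≤ (s - 1)/2 := by nlinarith
  have hEu' : E ≤ 2.62 := by
    have h1 : (s-1)/2 * (1 - ((3 - s)/2)^n') ≤ (s-1)/2 := by nlinarith
    calc E ≤ 2 + (s-1)/2 * (1 - ((3 - s)/2)^n') := hEu
      _ ≤ 2 + (s-1)/2 := by linarith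
      _ ≤ 2.62 := by linarith
  -- define D₂ and t
  set D2 : ℕ := m * Nat.fib (m+2) + Nat.fib m + 1 with hD2def
  set t : ℝ := (Nat.fib (n'+1) : ℝ)^2 + 1 - (3 + s)/2 * D2 with htdef
  -- t = ψ^m (1 + mβ) + β
  have hψβ : ((1 - s)/2)^2 = (3 - s)/2 := by nlinarith [s5_sq]
  have ht : t = ((1 - s)/2)^m * (1 + m * ((3 - s)/2)) + (3 - s)/2 := by
    have hcast : ((Nat.fib (n'+1) : ℝ))^2
        = (m:ℝ) * Nat.fib (m+4) + Nat.fib (m+2) + 2 := by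
      exact_mod_cast h.symm
    have hk1 : (Nat.fib (m+4) : ℝ) = (3 + s)/2 * Nat.fib (m+2) + ((1 - s)/2)^(m+2) :=
      key (m+2)
    have hk2 : (Nat.fib (m+2) : ℝ) = (3 + s)/2 * Nat.fib m + ((1 - s)/2)^m := key m
    have hpow : ((1 - s)/2)^(m+2) = ((1 - s)/2)^m * ((3 - s)/2) := by
      rw [pow_add, hψβ]
    rw [htdef, hcast, hD2def]
    push_cast
    rw [hk1, hk2, hpow]
    ring
  -- |ψ^m| = σ^m
  have habs : |((1 - s)/2)^m| = ((s - 1)/2)^m := by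
    rw [abs_pow]
    congr 1
    rw [abs_of_nonpos (by nlinarith)]
    ring
  have h1mβ : (0:ℝ) ≤ 1 + m * ((3 - s)/2) := by positivity
  have htb := tBound m hm
  have htabs : |t - (3 - s)/2| ≤ 0.28 := by
    have heq : t - (3 - s)/2 = ((1 - s)/2)^m * (1 + m * ((3 - s)/2)) := by
      rw [ht]; ring
    rw [heq, abs_mul, habs, abs_of_nonneg h1mβ]
    exact htb
  have hβub : (3 - s)/2 ≤ 0.382 := by nlinarith
  have hβlb : (0.3819:ℝ) ≤ (3 - s)/2 := by nlinarith
  have htl : 0.10 ≤ t := by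
    have := abs_le.1 htabs
    linarith [this.1]
  have htu : t ≤ 0.67 := by
    have := abs_le.1 htabs
    linarith [this.2]
  -- E - t = φ² * (D2 - dd (n'+1))
  set c : ℤ := (D2 : ℤ) - (dd (n'+1) : ℤ) with hcdef
  have hEt : E - t = (3 + s)/2 * (c : ℝ) := by
    rw [hEdef, htdef, hcdef]
    push_cast
    ring
  have hφ2 : (2.618:ℝ) ≤ (3 + s)/2 := by nlinarith
  clear_value E t D2 c
  clear hEdef htdef hcdef hD2def hEu htabs ht h
  rcases le_or_gt c 0 with hc | hc
  · have hcR : (c:ℝ) ≤ 0 := by exact_mod_cast hc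
    have : (3 + s)/2 * (c:ℝ) ≤ 0 := mul_nonpos_of_nonneg_of_nonpos (by nlinarith) hcR
    linarith
  · have hc1 : (1:ℤ) ≤ c := hc
    have hcR : (1:ℝ) ≤ (c:ℝ) := by exact_mod_cast hc1
    have : (3 + s)/2 ≤ (3 + s)/2 * (c:ℝ) := le_mul_of_one_le_right (by nlinarith) hcR
    linarith

theorem sum_j_fib_eq_fib_sq (k n : ℕ) (hk : 0 < k) (hn : 0 < n) :
    (∑ j ∈ Finset.Icc 1 k, j * Nat.fib j) = Nat.fib n ^ 2 ↔
      (k, n) = (1, 1) ∨ (k, n) = (1, 2) ∨ (k, n) = (3, 4) := by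
  have fib3 : Nat.fib 3 = 2 := rfl
  have fib5 : Nat.fib 5 = 5 := rfl
  constructor
  · intro h
    by_cases hk6 : k ≤ 6
    · interval_cases k
      · -- k = 1 : sum = 1
        have hs : (∑ j ∈ Finset.Icc 1 1, j * Nat.fib j) = 1 := by decide
        rw [hs] at h
        have hf : Nat.fib n = 1 := by nlinarith [h.symm]
        have hn2 : n ≤ 2 := by
          by_contra hcon
          have : Nat.fib 3 ≤ Nat.fib n := Nat.fib_mono (by omega)
          omega
        interval_cases n
        · left; rfl
        · right; left; rfl
      · -- k = 2 : sum = 3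
        have hs : (∑ j ∈ Finset.Icc 1 2, j * Nat.fib j) = 3 := by decide
        rw [hs] at h
        exfalso
        rcases le_or_gt (Nat.fib n) 1 with hf | hf
        · nlinarith [h.symm]
        · nlinarith [h.symm]
      · -- k = 3 : sum = 9, fib n = 3, n = 4
        have hs : (∑ j ∈ Finset.Icc 1 3, j * Nat.fib j) = 9 := by decide
        rw [hs] at h
        have hf : Nat.fib n = 3 := by nlinarith [h.symm]
        have hn4 : n = 4 := by
          by_contra hcon
          rcases lt_or_gt_of_ne hcon with hlt | hgt
          · have : Nat.fib n ≤ Nat.fib 3 := Nat.fib_mono (by omega)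
            omega
          · have : Nat.fib 5 ≤ Nat.fib n := Nat.fib_mono (by omega)
            omega
        right; right; rw [hn4]
      · -- k = 4 : sum = 21
        have hs : (∑ j ∈ Finset.Icc 1 4, j * Nat.fib j) = 21 := by decide
        rw [hs] at h
        exfalso
        rcases le_or_gt (Nat.fib n) 4 with hf | hf
        · nlinarith [h.symm]
        · nlinarith [h.symm]
      · -- k = 5 : sum = 46
        have hs : (∑ j ∈ Finset.Icc 1 5, j * Nat.fib j) = 46 := by decide
        rw [hs] at h
        exfalso
        rcases le_or_gt (Nat.fib n) 6 with hf | hf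
        · nlinarith [h.symm]
        · nlinarith [h.symm]
      · -- k = 6 : sum = 94
        have hs : (∑ j ∈ Finset.Icc 1 6, j * Nat.fib j) = 94 := by decide
        rw [hs] at h
        exfalso
        rcases le_or_gt (Nat.fib n) 9 with hf | hf
        · nlinarith [h.symm]
        · nlinarith [h.symm]
    · exfalso
      obtain ⟨m, rfl⟩ : ∃ m, k = m+2 := ⟨k-2, by omega⟩
      have hm : 5 ≤ m := by omega
      rw [sumS] at h
      exact main_case m n hm hn h
  · rintro (h | h | h) <;> (rw [Prod.ext_iff] at h; obtain ⟨rfl, rfl⟩ := h) <;> decide
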